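/- Let E be a real normed space, e ∈ E with ‖e‖ = 1, and e' ∈ E with ‖e'‖ = 1 and ‖e + e'‖ = 2. Then for every real r > 0, ‖r•e + e'‖ = r + 1. -/

import Mathlib

theorem norm_smul_add_of_mem_st
    {E : Type*} [NormedAddCommGroup E] [NormedSpace ℝ E]
    (e e' : E) (he : ‖e‖ = 1) (he' : ‖e'‖ = 1) (h : ‖e + e'‖ = 2)
    (r : ℝ) (hr : 0 < r) :
    ‖r • e + e'‖ = r + 1 := by
  have key : ∀ t : ℝ, 0 ≤ t → t ≤ 1 → ‖t • e + (1 - t) • e'‖ = 1 := by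
    intro t ht0 ht1
    have hle : ‖t • e + (1 - t) • e'‖ ≤ 1 := by
      calc ‖t • e + (1 - t) • e'‖ ≤ ‖t • e‖ + ‖(1 - t) • e'‖ := norm_add_le _ _
        _ = t * 1 + (1 - t) * 1 := by
            rw [norm_smul, norm_smul, he, he', Real.norm_of_nonneg ht0,
              Real.norm_of_nonneg (by linarith)]
        _ = 1 := by ring
    have hge : 1 ≤ ‖t • e + (1 - t) • e'‖ := by
      have hsplit : e + e' = (t • e + (1 - t) • e') + ((1 - t) • e + t • e') := by
        module
      have h2 : (2 : ℝ) ≤ ‖t • e + (1 - t) • e'‖ + ‖(1 - t) • e + t • e'‖ := by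
        calc (2 : ℝ) = ‖e + e'‖ := h.symm
          _ ≤ _ := by rw [hsplit]; exact norm_add_le _ _
      have hle2 : ‖(1 - t) • e + t • e'‖ ≤ 1 := by
        calc ‖(1 - t) • e + t • e'‖ ≤ ‖(1 - t) • e‖ + ‖t • e'‖ := norm_add_le _ _
          _ = (1 - t) * 1 + t * 1 := by
              rw [norm_smul, norm_smul, he, he', Real.norm_of_nonneg ht0,
                Real.norm_of_nonneg (by linarith)]
          _ = 1 := by ring
      linarith
    linarith
  have hr1 : (0 : ℝ) < r + 1 := by linarith
  have ht : ‖(r / (r + 1)) • e + (1 - r / (r + 1)) • e'‖ = 1 :=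
    key _ (by positivity) (by rw [div_le_one hr1]; linarith)
  have heq : r • e + e' = (r + 1) • ((r / (r + 1)) • e + (1 - r / (r + 1)) • e') := by
    rw [smul_add, smul_smul, smul_smul]
    congr 1
    · congr 1; field_simp
    · field_simp; rw [add_sub_cancel_left, one_smul]
  rw [heq, norm_smul, ht, Real.norm_of_nonneg hr1.le, mul_one]
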